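/- arXiv:1709.08443 — 2 statements merged into one kernel-verified Lean document; each statement's English description precedes it below -/
import Mathlib

section
/- For every τ ∈ (-1,1) there exists c > 0 such that for all odd positive integers k and all real λ with |λ| < c·k, one has |sin(2π·√(λ + (k² - τ)/16))| ≥ min{(1/2)·√(1+τ), (1/2)·√(1-τ)}. -/
open Real

set_option maxHeartbeats 1000000 in
theorem stmt_0 (τ : ℝ) (hτ : τ ∈ Set.Ioo (-1 : ℝ) 1) :
    ∃ c > (0 : ℝ), ∀ k : ℕ, Odd k → 0 < k → ∀ lam : ℝ, |lam| < c * k →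
      min ((1 / 2) * Real.sqrt (1 + τ)) ((1 / 2) * Real.sqrt (1 - τ)) ≤
        |Real.sin (2 * π * Real.sqrt (lam + ((k : ℝ) ^ 2 - τ) / 16))| := by
  obtain ⟨ht1, ht2⟩ := hτ
  have habs : |τ| < 1 := abs_lt.mpr ⟨ht1, ht2⟩
  set δ : ℝ := 1 - |τ| with hδdef
  have hδ0 : 0 < δ := by simp only [hδdef]; linarith
  have hδ1 : δ ≤ 1 := by
    have := abs_nonneg τ
    simp only [hδdef]; linarith
  have hδlo : δ ≤ 1 - τ := by
    rcases abs_cases τ with ⟨h, _⟩ | ⟨h, _⟩ <;> simp only [hδdef, h] <;> linarith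
  have hδhi : 1 - τ ≤ 2 - δ := by
    rcases abs_cases τ with ⟨h, _⟩ | ⟨h, _⟩ <;> simp only [hδdef, h] <;> linarith
  have hsqδ1 : Real.sqrt δ ≤ 1 := by
    rw [show (1 : ℝ) = Real.sqrt 1 by rw [Real.sqrt_one]]
    exact Real.sqrt_le_sqrt hδ1
  have hmin : min ((1 / 2) * Real.sqrt (1 + τ)) ((1 / 2) * Real.sqrt (1 - τ))
      ≤ (1 / 2) * Real.sqrt δ := by
    rcases le_or_gt 0 τ with h | h
    · have h' : δ = 1 - τ := by rw [hδdef, abs_of_nonneg h]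
      rw [h']; exact min_le_right _ _
    · have h' : δ = 1 + τ := by rw [hδdef, abs_of_neg h]; ring
      rw [h']; exact min_le_left _ _
  clear habs
  clear_value δ
  clear hδdef
  refine ⟨δ / 100, by positivity, ?_⟩
  intro k hk hk0 lam hlam
  refine hmin.trans ?_
  have hpi := Real.pi_pos
  by_cases hk1 : k = 1
  · -- case k = 1
    subst hk1
    have hcast : ((1 : ℕ) : ℝ) = 1 := by norm_num
    rw [hcast]
    obtain ⟨hlam1, hlam2⟩ := abs_lt.mp hlam
    push_cast at hlam1 hlam2
    set A : ℝ := lam + ((1 : ℝ) ^ 2 - τ) / 16 with hA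
    have hA0 : 0 ≤ A := by simp only [hA]; nlinarith
    have hAeq : 16 * A = 16 * lam + 1 - τ := by simp only [hA]; ring
    clear_value A
    set s : ℝ := Real.sqrt A with hs
    have hs0 : 0 ≤ s := Real.sqrt_nonneg A
    have hs2 : s ^ 2 = A := Real.sq_sqrt hA0
    clear_value s
    set u : ℝ := 4 * s with hu
    have hu0 : 0 ≤ u := by positivity
    have hu2 : u ^ 2 = 16 * lam + 1 - τ := by
      simp only [hu]; nlinarith [hs2, hAeq]
    have harg : 2 * π * s = π * u / 2 := by simp only [hu]; ring
    clear_value u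
    have hu2lo : δ / 4 ≤ u ^ 2 := by rw [hu2]; nlinarith
    have hu2hi : u ^ 2 ≤ 2 := by rw [hu2]; nlinarith
    rw [harg]
    rcases le_or_gt u 1 with hcase | hcase
    · -- u ≤ 1 : sin(πu/2) ≥ u ≥ √δ/2
      have hsin : u ≤ Real.sin (π * u / 2) := by
        have h1 : 0 ≤ π * u / 2 := by positivity
        have h2 : π * u / 2 ≤ π / 2 := by nlinarith
        have hle := Real.mul_le_sin h1 h2
        have heq : 2 / π * (π * u / 2) = u := by field_simp
        rw [heq] at hle; exact hle
      have hub : (1 / 2) * Real.sqrt δ ≤ u := by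
        nlinarith [Real.sq_sqrt hδ0.le, Real.sqrt_nonneg δ]
      calc (1 / 2) * Real.sqrt δ ≤ u := hub
        _ ≤ Real.sin (π * u / 2) := hsin
        _ ≤ |Real.sin (π * u / 2)| := le_abs_self _
    · -- 1 < u : sin(πu/2) = sin(π(2-u)/2) ≥ 2-u ≥ 1/2
      have hu32 : u ≤ 3 / 2 := by nlinarith
      have hsin : 2 - u ≤ Real.sin (π * u / 2) := by
        have h1 : 0 ≤ π * (2 - u) / 2 := by nlinarith
        have h2 : π * (2 - u) / 2 ≤ π / 2 := by nlinarith
        have hle := Real.mul_le_sin h1 h2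
        have heq : 2 / π * (π * (2 - u) / 2) = 2 - u := by field_simp
        have hrw : π * (2 - u) / 2 = π - π * u / 2 := by ring
        rw [heq, hrw, Real.sin_pi_sub] at hle
        exact hle
      calc (1 / 2) * Real.sqrt δ ≤ 1 / 2 := by linarith
        _ ≤ 2 - u := by linarith
        _ ≤ Real.sin (π * u / 2) := hsin
        _ ≤ |Real.sin (π * u / 2)| := le_abs_self _
  · -- case k ≥ 3
    obtain ⟨m, rfl⟩ := hk
    have hm1 : 1 ≤ m := by omega
    set K : ℝ := ((2 * m + 1 : ℕ) : ℝ) with hK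
    have hK3 : 3 ≤ K := by
      simp only [hK]; push_cast
      have : (1 : ℝ) ≤ (m : ℝ) := by exact_mod_cast hm1
      linarith
    obtain ⟨hlam1, hlam2⟩ := abs_lt.mp hlam
    have hlamlo : -(K / 100) ≤ lam := by nlinarith
    have hlamhi : lam ≤ K / 100 := by nlinarith
    set A : ℝ := lam + (K ^ 2 - τ) / 16 with hA
    have hA0 : 0 ≤ A := by simp only [hA]; nlinarith
    have hAlo : K ^ 2 / 16 - K / 100 - 1 / 16 ≤ A := by simp only [hA]; nlinarith
    have hAhi : A ≤ K ^ 2 / 16 + K / 100 + 1 / 16 := by simp only [hA]; nlinarith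
    clear_value A
    set s : ℝ := Real.sqrt A with hs
    have hs0 : 0 ≤ s := Real.sqrt_nonneg A
    have hs2 : s ^ 2 = A := Real.sq_sqrt hA0
    clear_value s
    have hsr : s ≤ K / 4 + 1 / 8 := by nlinarith
    have hsl : K / 4 - 1 / 8 ≤ s := by nlinarith
    set θ : ℝ := 2 * π * (s - K / 4) with hθ
    have key : Real.sin (2 * π * s) = (-1 : ℝ) ^ m * Real.cos θ := by
      have harg : 2 * π * s = (θ + π / 2) + (m : ℝ) * π := by
        simp only [hθ, hK]; push_cast; ring
      rw [harg, Real.sin_add_nat_mul_pi, Real.sin_add_pi_div_two]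
    have hθ1 : θ ≤ π / 4 := by simp only [hθ]; nlinarith
    have hθ2 : -(π / 4) ≤ θ := by simp only [hθ]; nlinarith
    clear_value θ
    rw [key, abs_mul, abs_pow, abs_neg, abs_one, one_pow, one_mul]
    have hθb : θ ^ 2 ≤ (π / 4) ^ 2 := by nlinarith
    have hcos : 1 / 2 ≤ Real.cos θ := by
      have h1 := Real.one_sub_sq_div_two_le_cos (x := θ)
      have hπ315 : π < 3.15 := Real.pi_lt_d2
      nlinarith
    calc (1 / 2) * Real.sqrt δ ≤ 1 / 2 := by linarith
      _ ≤ Real.cos θ := hcos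
      _ ≤ |Real.cos θ| := le_abs_self _
end

section
/- Let f : ℝ × ℝ → ℝ be continuous, odd in the second variable, with f(x,s) = o(s) as s → 0 uniformly in x, and such that s ↦ f(x,s)/|s| is strictly increasing on (-∞,0) and (0,∞) for each x. Then for all x ∈ ℝ and all s ≠ 0, f(x,s)·s > 2·F(x,s) > 0, where F(x,s) = ∫₀ˢ f(x,t) dt. -/
open MeasureTheory

/-- Under (H2), (H3): `f` continuous, odd in `s`, `f(x,s) = o(s)` as `s → 0`
uniformly in `x`, and `s ↦ f(x,s)/|s|` strictly increasing on each half-line,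
one has `f(x,s)·s > 2F(x,s) > 0` for `s ≠ 0`, where `F(x,s) = ∫₀ˢ f(x,t) dt`. -/
theorem stmt_15 (f : ℝ → ℝ → ℝ) (hf_cont : Continuous (fun p : ℝ × ℝ => f p.1 p.2))
    (hodd : ∀ x s, f x (-s) = -f x s)
    (hsmall : ∀ ε > (0 : ℝ), ∃ δ > (0 : ℝ), ∀ x s : ℝ, |s| < δ → |f x s| ≤ ε * |s|)
    (hmono : ∀ x : ℝ, StrictMonoOn (fun s => f x s / |s|) (Set.Iio (0 : ℝ)) ∧
      StrictMonoOn (fun s => f x s / |s|) (Set.Ioi (0 : ℝ))) :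
    ∀ x s : ℝ, s ≠ 0 →
      f x s * s > 2 * (∫ t in (0 : ℝ)..s, f x t) ∧
      (0 : ℝ) < 2 * (∫ t in (0 : ℝ)..s, f x t) := by
  have hc : ∀ x : ℝ, Continuous (fun s => f x s) := fun x =>
    hf_cont.comp (Continuous.prodMk_right x)
  -- nonnegativity of f x t / t for t > 0
  have hge : ∀ x t : ℝ, 0 < t → 0 ≤ f x t / t := by
    intro x t ht
    by_contra h
    push_neg at h
    set c := f x t / t with hc'
    obtain ⟨δ, hδ, hδ'⟩ := hsmall (-c/2) (by linarith)
    set τ := min (δ/2) (t/2) with hτdef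
    have hτ0 : 0 < τ := lt_min (by linarith) (by linarith)
    have hτδ : τ < δ := lt_of_le_of_lt (min_le_left _ _) (by linarith)
    have hτt : τ < t := lt_of_le_of_lt (min_le_right _ _) (by linarith)
    have h1 : |f x τ| ≤ (-c/2) * |τ| := hδ' x τ (by rwa [abs_of_pos hτ0])
    have h2 : f x τ / |τ| < f x t / |t| :=
      (hmono x).2 (Set.mem_Ioi.2 hτ0) (Set.mem_Ioi.2 ht) hτt
    rw [abs_of_pos hτ0] at h1 h2
    rw [abs_of_pos ht] at h2
    have h3 : -((-c/2)*τ) ≤ f x τ := neg_le_of_abs_le h1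
    have h5 : (c/2) ≤ f x τ / τ := by
      rw [le_div_iff₀ hτ0]; nlinarith
    linarith
  have hfpos : ∀ x t : ℝ, 0 < t → 0 < f x t := by
    intro x t ht
    have h1 : f x (t/2) / |t/2| < f x t / |t| :=
      (hmono x).2 (Set.mem_Ioi.2 (by linarith : (0:ℝ) < t/2)) (Set.mem_Ioi.2 ht) (by linarith)
    rw [abs_of_pos (by linarith : (0:ℝ) < t/2), abs_of_pos ht] at h1
    have h2 := hge x (t/2) (by linarith)
    have h3 : 0 < f x t / t := lt_of_le_of_lt h2 h1
    have := (lt_div_iff₀ ht).mp h3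
    linarith
  -- main case: s > 0
  have key : ∀ x s : ℝ, 0 < s →
      f x s * s > 2 * (∫ t in (0:ℝ)..s, f x t) ∧
      (0:ℝ) < 2 * (∫ t in (0:ℝ)..s, f x t) := by
    intro x s hs
    have hint : IntervalIntegrable (fun t => f x t) volume 0 s := (hc x).intervalIntegrable _ _
    have hFpos : 0 < ∫ t in (0:ℝ)..s, f x t :=
      intervalIntegral.intervalIntegral_pos_of_pos_on hint (fun t ht => hfpos x t ht.1) hs
    refine ⟨?_, by linarith⟩
    set c := f x s / s with hc'
    have hcs : c * s = f x s := by rw [hc', div_mul_cancel₀ _ hs.ne']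
    have hintc : IntervalIntegrable (fun t : ℝ => c * t) volume 0 s :=
      (continuous_const.mul continuous_id).intervalIntegrable _ _
    have hint2 : IntervalIntegrable (fun t => c * t - f x t) volume 0 s :=
      hintc.sub hint
    have hpos : 0 < ∫ t in (0:ℝ)..s, (c * t - f x t) := by
      apply intervalIntegral.intervalIntegral_pos_of_pos_on hint2 _ hs
      intro t ht
      have h1 : f x t / |t| < f x s / |s| :=
        (hmono x).2 (Set.mem_Ioi.2 ht.1) (Set.mem_Ioi.2 hs) ht.2
      rw [abs_of_pos ht.1, abs_of_pos hs] at h1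
      have h2 : f x t < c * t := by
        rw [div_lt_iff₀ ht.1] at h1; rw [hc']; linarith
      linarith
    have heval : (∫ t in (0:ℝ)..s, (c * t - f x t))
        = c * (s^2/2) - ∫ t in (0:ℝ)..s, f x t := by
      rw [intervalIntegral.integral_sub hintc hint, intervalIntegral.integral_const_mul,
        integral_id]
      ring_nf
    rw [heval] at hpos
    nlinarith [hcs]
  intro x s hs
  rcases lt_or_gt_of_ne hs with hneg | hpos
  · -- s < 0 : reduce to -s > 0
    have hFeven : (∫ t in (0:ℝ)..(-s), f x t) = ∫ t in (0:ℝ)..s, f x t := by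
      have hA : (∫ t in (0:ℝ)..s, f x (-t)) = ∫ t in (-s:ℝ)..(-(0:ℝ)), f x t :=
        intervalIntegral.integral_comp_neg (fun t => f x t)
      rw [neg_zero] at hA
      have hB : (∫ t in (0:ℝ)..s, f x (-t)) = -∫ t in (0:ℝ)..s, f x t := by
        simp only [hodd]
        exact intervalIntegral.integral_neg
      have hC : (∫ t in (-s:ℝ)..(0:ℝ), f x t) = -∫ t in (0:ℝ)..(-s), f x t :=
        intervalIntegral.integral_symm 0 (-s)
      rw [hB, hC] at hA
      linarith
    obtain ⟨k1, k2⟩ := key x (-s) (by linarith)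
    rw [hFeven] at k1 k2
    have hfs : f x s * s = f x (-s) * (-s) := by
      have := hodd x (-s)
      rw [neg_neg] at this
      rw [this]; ring
    rw [hfs]
    exact ⟨k1, k2⟩
  · exact key x s hpos
end
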